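/- arXiv:1811.02123 — 5 statements merged into one kernel-verified Lean document; each statement's English description precedes it below -/
import Mathlib

section
/- For real numbers p, q and tangent vector components (ẋ, ẏ) ≠ (0,0), if p² + q² < 1/3, then p·ẋ + q·ẏ < (1/2)·√((1+p²)ẋ² + 2pq·ẋẏ + (1+q²)ẏ²). -/
theorem slope_convexity_plane (p q xd yd : ℝ)
    (hne : (xd, yd) ≠ (0, 0))
    (h : p ^ 2 + q ^ 2 < 1 / 3) :
    p * xd + q * yd <
      (1 / 2) * Real.sqrt ((1 + p ^ 2) * xd ^ 2 + 2 * p * q * xd * yd + (1 + q ^ 2) * yd ^ 2) := by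
  have h0 : xd ≠ 0 ∨ yd ≠ 0 := by
    by_contra h'
    push_neg at h'
    exact hne (by simp [h'.1, h'.2])
  have hs : 0 < xd ^ 2 + yd ^ 2 := by
    rcases h0 with h0 | h0 <;> positivity
  set E := (1 + p ^ 2) * xd ^ 2 + 2 * p * q * xd * yd + (1 + q ^ 2) * yd ^ 2 with hEdef
  have hE : 4 * (p * xd + q * yd) ^ 2 < E := by
    nlinarith [sq_nonneg (p * yd - q * xd), mul_lt_mul_of_pos_right h hs]
  have hEpos : 0 < E := by nlinarith [sq_nonneg (p * xd + q * yd)]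
  rcases le_or_gt (p * xd + q * yd) 0 with hb | hb
  · have : 0 < Real.sqrt E := Real.sqrt_pos.mpr hEpos
    linarith
  · have h2 : 2 * (p * xd + q * yd) < Real.sqrt E := by
      rw [Real.lt_sqrt (by linarith)]
      nlinarith
    linarith
end

section
/- Let f: ℝ² → ℝ be differentiable at a point with partial derivatives f_x, f_y, with (f_x, f_y) ≠ (0,0). Then the condition that f_x·ẋ + f_y·ẏ < (1/2)·√((1+f_x²)ẋ² + 2 f_x f_y ẋẏ + (1+f_y²)ẏ²) holds for all (ẋ, ẏ) ≠ (0,0) is equivalent to f_x² + f_y² < 1/3. -/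
theorem slope_convexity_criterion (f : ℝ × ℝ → ℝ) (P : ℝ × ℝ) (fx fy : ℝ)
    (hdiff : HasFDerivAt f (fx • (ContinuousLinearMap.fst ℝ ℝ ℝ) +
      fy • (ContinuousLinearMap.snd ℝ ℝ ℝ)) P)
    (hne : (fx, fy) ≠ (0, 0)) :
    (∀ xd yd : ℝ, (xd, yd) ≠ (0, 0) →
        fx * xd + fy * yd <
          (1 / 2) * Real.sqrt ((1 + fx ^ 2) * xd ^ 2 + 2 * fx * fy * xd * yd
            + (1 + fy ^ 2) * yd ^ 2)) ↔
      fx ^ 2 + fy ^ 2 < 1 / 3 := by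
  have hne' : fx ≠ 0 ∨ fy ≠ 0 := by
    by_contra hc; push_neg at hc; exact hne (by simp [hc.1, hc.2])
  have hr : 0 < fx ^ 2 + fy ^ 2 := by
    rcases hne' with h | h
    · have := pow_pos (abs_pos.mpr h) 2
      nlinarith [sq_nonneg fy, sq_abs fx]
    · have := pow_pos (abs_pos.mpr h) 2
      nlinarith [sq_nonneg fx, sq_abs fy]
  constructor
  · intro h
    have key := h fx fy hne
    have hE : (1 + fx ^ 2) * fx ^ 2 + 2 * fx * fy * fx * fy + (1 + fy ^ 2) * fy ^ 2
        = (fx ^ 2 + fy ^ 2) * (1 + (fx ^ 2 + fy ^ 2)) := by ring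
    rw [hE] at key
    have hSnn : (0:ℝ) ≤ (fx ^ 2 + fy ^ 2) * (1 + (fx ^ 2 + fy ^ 2)) := by positivity
    have hs := Real.sq_sqrt hSnn
    have hsn := Real.sqrt_nonneg ((fx ^ 2 + fy ^ 2) * (1 + (fx ^ 2 + fy ^ 2)))
    -- from key : fx^2+fy^2 < (1/2) * sqrt S, square both sides
    nlinarith [key, hs, hsn, hr, sq_nonneg (Real.sqrt ((fx ^ 2 + fy ^ 2) * (1 + (fx ^ 2 + fy ^ 2))) - 2 * (fx ^ 2 + fy ^ 2))]
  · intro h xd yd hvne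
    have hv' : xd ≠ 0 ∨ yd ≠ 0 := by
      by_contra hc; push_neg at hc; exact hvne (by simp [hc.1, hc.2])
    have hv : 0 < xd ^ 2 + yd ^ 2 := by
      rcases hv' with h' | h'
      · have := pow_pos (abs_pos.mpr h') 2
        nlinarith [sq_nonneg yd, sq_abs xd]
      · have := pow_pos (abs_pos.mpr h') 2
        nlinarith [sq_nonneg xd, sq_abs yd]
    set β := fx * xd + fy * yd with hβ
    have hE : (1 + fx ^ 2) * xd ^ 2 + 2 * fx * fy * xd * yd + (1 + fy ^ 2) * yd ^ 2
        = (xd ^ 2 + yd ^ 2) + β ^ 2 := by rw [hβ]; ring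
    rw [hE]
    have hSpos : 0 < (xd ^ 2 + yd ^ 2) + β ^ 2 := by positivity
    -- Cauchy-Schwarz: β² ≤ (fx²+fy²)(xd²+yd²)
    have hcs : β ^ 2 ≤ (fx ^ 2 + fy ^ 2) * (xd ^ 2 + yd ^ 2) := by
      nlinarith [sq_nonneg (fx * yd - fy * xd)]
    rcases le_or_gt β 0 with hb | hb
    · have : 0 < Real.sqrt ((xd ^ 2 + yd ^ 2) + β ^ 2) := Real.sqrt_pos.mpr hSpos
      linarith
    · have h4 : (2 * β) ^ 2 < (xd ^ 2 + yd ^ 2) + β ^ 2 := by nlinarith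
      have h2 : 2 * β < Real.sqrt ((xd ^ 2 + yd ^ 2) + β ^ 2) :=
        (Real.lt_sqrt (by linarith)).mpr h4
      linarith
end

section
/- The function g(b) = (2 − 3b²)/(2(1−b²)√(1−b²)) is strictly monotone decreasing on (0, 1/2), with values in (5√3/9, 1). -/
section
open Real Set

noncomputable def gfun : ℝ → ℝ := fun b => (2 - 3 * b ^ 2) / (2 * (1 - b ^ 2) * Real.sqrt (1 - b ^ 2))

lemma g_anti : StrictAntiOn gfun (Set.Icc 0 (1/2)) := by
  apply strictAntiOn_of_deriv_neg (convex_Icc _ _)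
  · apply ContinuousOn.div
    · fun_prop
    · fun_prop
    · intro x hx
      simp only [Set.mem_Icc] at hx
      have h1 : (0:ℝ) < 1 - x ^ 2 := by nlinarith [hx.1, hx.2]
      have h2 : 0 < Real.sqrt (1 - x ^ 2) := Real.sqrt_pos.mpr h1
      positivity
  · intro x hx
    rw [interior_Icc] at hx
    obtain ⟨hx0, hx2⟩ := hx
    have h1 : (0:ℝ) < 1 - x ^ 2 := by nlinarith
    have hs : 0 < Real.sqrt (1 - x ^ 2) := Real.sqrt_pos.mpr h1
    have hs2 : Real.sqrt (1 - x ^ 2) ^ 2 = 1 - x ^ 2 := Real.sq_sqrt h1.le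
    set s := Real.sqrt (1 - x ^ 2) with hsdef
    have hinner : HasDerivAt (fun b : ℝ => 1 - b ^ 2) (-(2 * x)) x := by
      simpa using (hasDerivAt_pow 2 x).const_sub 1
    have hsq : HasDerivAt (fun b : ℝ => Real.sqrt (1 - b ^ 2))
        (1 / (2 * s) * (-(2 * x))) x := by
      exact (Real.hasDerivAt_sqrt (by positivity)).comp x hinner
    have hD : HasDerivAt (fun b : ℝ => 2 * (1 - b ^ 2) * Real.sqrt (1 - b ^ 2))
        ((2 * -(2 * x)) * s + (2 * (1 - x ^ 2)) * (1 / (2 * s) * (-(2 * x)))) x := by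
      exact ((hinner.const_mul 2).mul hsq)
    have hN : HasDerivAt (fun b : ℝ => 2 - 3 * b ^ 2) (-(3 * (2 * x))) x := by
      simpa using ((hasDerivAt_pow 2 x).const_mul 3).const_sub 2
    have hDne : 2 * (1 - x ^ 2) * s ≠ 0 := by positivity
    have hf := hN.div hD hDne
    have : deriv gfun x = deriv (fun y : ℝ => (2 - 3 * y ^ 2) / (2 * (1 - y ^ 2) * Real.sqrt (1 - y ^ 2))) x := rfl
    have key : (-(3 * (2 * x)) * (2 * (1 - x ^ 2) * Real.sqrt (1 - x ^ 2)) -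
          (2 - 3 * x ^ 2) * (2 * -(2 * x) * s + 2 * (1 - x ^ 2) * (1 / (2 * s) * -(2 * x)))) /
        (2 * (1 - x ^ 2) * Real.sqrt (1 - x ^ 2)) ^ 2
        = -(6 * x ^ 3 * s) / (2 * s ^ 2 * s) ^ 2 := by
      rw [← hsdef, ← hs2]
      field_simp
      linear_combination (-12) * hs2
    rw [this, show deriv (fun y : ℝ => (2 - 3 * y ^ 2) / (2 * (1 - y ^ 2) * Real.sqrt (1 - y ^ 2))) x = _ from hf.deriv, key]
    apply div_neg_of_neg_of_pos
    · nlinarith [mul_pos (mul_pos hx0 (mul_pos hx0 hx0)) hs]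
    · positivity

lemma g_zero : gfun 0 = 1 := by
  simp [gfun, Real.sqrt_one]

lemma g_half : gfun (1/2) = 5 * Real.sqrt 3 / 9 := by
  have hs : (0:ℝ) < Real.sqrt 3 := Real.sqrt_pos.mpr (by norm_num)
  have hs2 : Real.sqrt 3 ^ 2 = 3 := Real.sq_sqrt (by norm_num)
  have h1 : (Real.sqrt 3 / 2)^2 = 3/4 := by rw [div_pow, hs2]; norm_num
  have hsq : Real.sqrt ((1:ℝ) - (1/2)^2) = Real.sqrt 3 / 2 := by
    rw [show ((1:ℝ) - (1/2)^2) = 3/4 by norm_num, ← h1]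
    exact Real.sqrt_sq (by positivity)
  rw [gfun, hsq]
  field_simp
  nlinarith [hs2]

end

theorem HT_density_decreasing :
    StrictAntiOn (fun b : ℝ => (2 - 3 * b ^ 2) / (2 * (1 - b ^ 2) * Real.sqrt (1 - b ^ 2)))
      (Set.Ioo 0 (1 / 2)) ∧
    ∀ b ∈ Set.Ioo (0 : ℝ) (1 / 2),
      (2 - 3 * b ^ 2) / (2 * (1 - b ^ 2) * Real.sqrt (1 - b ^ 2)) ∈
        Set.Ioo (5 * Real.sqrt 3 / 9) 1 := by
  constructor
  · exact g_anti.mono Set.Ioo_subset_Icc_self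
  · intro b hb
    obtain ⟨hb0, hb2⟩ := hb
    constructor
    · have := g_anti (Set.mem_Icc.mpr ⟨hb0.le, hb2.le⟩)
        (Set.mem_Icc.mpr ⟨by norm_num, le_refl _⟩) hb2
      rw [g_half] at this
      exact this
    · have := g_anti (Set.mem_Icc.mpr ⟨le_refl _, by norm_num⟩)
        (Set.mem_Icc.mpr ⟨hb0.le, hb2.le⟩) hb0
      rw [g_zero] at this
      exact this
end

section
/- The function h(b) = (2+b²)(2−3b²)/(4(1−b²)√(1−b²)) is strictly monotone increasing on (0, 1/2), with values in (1, 5√3/8). -/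
private lemma mono_poly (u v : ℝ) (hu : 0 < u) (huv : u < v) (hv : v < 1/4) :
    0 < 16 - 56*(u+v) + 40*(u^2+v^2) + 160*u*v + 9*(u^3+v^3) - 95*u*v*(u+v)
        - 27*u*v*(u^2+v^2) + 37*u^2*v^2 + 27*u^2*v^2*(u+v) - 9*u^3*v^3 := by
  have hv0 : 0 < v := hu.trans huv
  have h1 : (0:ℝ) < 1/4 - v := by linarith
  have h2 : (0:ℝ) < 1/4 - u := by linarith
  nlinarith [mul_nonneg (sq_nonneg (1/4-u)) hu.le,
    mul_nonneg (sq_nonneg (1/4-v)) hv0.le,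
    mul_nonneg (mul_nonneg (sq_nonneg (1/4-u)) hu.le) h1.le,
    mul_nonneg (mul_nonneg (sq_nonneg (1/4-v)) hv0.le) h2.le,
    mul_nonneg (mul_nonneg (sq_nonneg (1/4-u)) (sq_nonneg (1/4-v))) hu.le,
    mul_nonneg (mul_nonneg (sq_nonneg (1/4-u)) (sq_nonneg (1/4-v))) hv0.le,
    mul_nonneg (mul_nonneg (mul_nonneg (sq_nonneg (1/4-u)) (sq_nonneg (1/4-v))) hu.le) h1.le,
    mul_nonneg (mul_nonneg (mul_nonneg (sq_nonneg (1/4-u)) (sq_nonneg (1/4-v))) hv0.le) h2.le,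
    mul_pos h1 h2, sq_nonneg (1/4-u), sq_nonneg (1/4-v),
    mul_nonneg (sq_nonneg (1/4-u)) h1.le, mul_nonneg (sq_nonneg (1/4-v)) h2.le,
    mul_nonneg (sq_nonneg (1/4-u)) (sq_nonneg (1/4-v)), h1.le, h2.le]

private lemma lower_core (s : ℝ) (hs : 3/4 < s^2) (hs1 : s < 1) (hs0 : 0 < s) :
    4 * s^3 < (3 - s^2) * (3*s^2 - 1) := by
  have key : 0 < 3*s^3 + 7*s^2 - 3*s - 3 := by nlinarith [mul_pos hs0 hs0]
  nlinarith [mul_pos (sub_pos.2 hs1) key]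

private lemma upper_core (s r : ℝ) (hr : r^2 = 3) (hr0 : 0 < r) (h2s : r < 2*s)
    (hs1 : s < 1) : 8 * ((3 - s^2) * (3*s^2 - 1)) < 20 * r * s^3 := by
  nlinarith [mul_pos (sub_pos.2 h2s) (mul_pos hr0 hr0), sq_nonneg (2*s - r),
    sq_nonneg (s*r), mul_pos hr0 (hr0.trans h2s), sq_nonneg (s - 1)]

theorem ratio_density_increasing :
    StrictMonoOn
      (fun b : ℝ => (2 + b ^ 2) * (2 - 3 * b ^ 2) / (4 * (1 - b ^ 2) * Real.sqrt (1 - b ^ 2)))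
      (Set.Ioo 0 (1 / 2)) ∧
    ∀ b ∈ Set.Ioo (0 : ℝ) (1 / 2),
      (2 + b ^ 2) * (2 - 3 * b ^ 2) / (4 * (1 - b ^ 2) * Real.sqrt (1 - b ^ 2)) ∈
        Set.Ioo 1 (5 * Real.sqrt 3 / 8) := by
  -- basic facts for b ∈ Ioo 0 (1/2)
  have facts : ∀ b ∈ Set.Ioo (0:ℝ) (1/2),
      0 < b ∧ b^2 < 1/4 ∧ 0 < Real.sqrt (1 - b^2) ∧ Real.sqrt (1 - b^2) < 1 ∧
      (Real.sqrt (1 - b^2))^2 = 1 - b^2 := by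
    intro b hb
    obtain ⟨hb0, hb2⟩ := hb
    have hbsq : b^2 < 1/4 := by nlinarith
    have h1 : (0:ℝ) < 1 - b^2 := by nlinarith
    refine ⟨hb0, hbsq, Real.sqrt_pos.2 h1, ?_, Real.sq_sqrt h1.le⟩
    have : (1:ℝ) - b^2 < 1 := by nlinarith
    calc Real.sqrt (1 - b^2) < Real.sqrt 1 := Real.sqrt_lt_sqrt h1.le this
      _ = 1 := Real.sqrt_one
  have hpos : ∀ b ∈ Set.Ioo (0:ℝ) (1/2),
      0 < (2 + b ^ 2) * (2 - 3 * b ^ 2) / (4 * (1 - b ^ 2) * Real.sqrt (1 - b ^ 2)) := by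
    intro b hb
    obtain ⟨hb0, hbsq, hs0, hs1, hs2⟩ := facts b hb
    have h1 : (0:ℝ) < 1 - b^2 := by nlinarith
    exact div_pos (by nlinarith) (by positivity)
  constructor
  · intro a ha b hb hab
    obtain ⟨ha0, hasq, hsa0, hsa1, hsa2⟩ := facts a ha
    obtain ⟨hb0, hbsq, hsb0, hsb1, hsb2⟩ := facts b hb
    simp only
    have husq : a^2 < b^2 := by nlinarith
    -- compare squares
    have hsq : ((2 + a ^ 2) * (2 - 3 * a ^ 2) / (4 * (1 - a ^ 2) * Real.sqrt (1 - a ^ 2)))^2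
        < ((2 + b ^ 2) * (2 - 3 * b ^ 2) / (4 * (1 - b ^ 2) * Real.sqrt (1 - b ^ 2)))^2 := by
      rw [div_pow, div_pow]
      have ea : (4 * (1 - a ^ 2) * Real.sqrt (1 - a ^ 2))^2 = 16 * (1 - a^2)^3 := by
        rw [mul_pow, mul_pow, hsa2]; ring
      have eb : (4 * (1 - b ^ 2) * Real.sqrt (1 - b ^ 2))^2 = 16 * (1 - b^2)^3 := by
        rw [mul_pow, mul_pow, hsb2]; ring
      have h1a : (0:ℝ) < 1 - a^2 := hsa2 ▸ pow_pos hsa0 2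
      have h1b : (0:ℝ) < 1 - b^2 := hsb2 ▸ pow_pos hsb0 2
      rw [ea, eb, div_lt_div_iff₀ (by nlinarith [pow_pos h1a 3]) (by nlinarith [pow_pos h1b 3])]
      have hG := mono_poly (a^2) (b^2) (pow_pos ha0 2) husq hbsq
      nlinarith [mul_pos (sub_pos.2 husq) hG]
    exact lt_of_pow_lt_pow_left₀ 2 (hpos b hb).le hsq
  · intro b hb
    obtain ⟨hb0, hbsq, hs0, hs1, hs2⟩ := facts b hb
    have hden : 0 < 4 * (1 - b ^ 2) * Real.sqrt (1 - b ^ 2) :=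
      mul_pos (by nlinarith : (0:ℝ) < 4 * (1 - b ^ 2)) hs0
    have hs34 : 3/4 < (Real.sqrt (1 - b^2))^2 := by rw [hs2]; linarith
    constructor
    · rw [lt_div_iff₀ hden]
      have h := lower_core (Real.sqrt (1 - b^2)) hs34 hs1 hs0
      have hcube : (Real.sqrt (1 - b^2))^3 = (1 - b^2) * Real.sqrt (1 - b^2) := by
        rw [pow_succ, hs2]
      rw [hcube] at h
      have hN : (2 + b^2) * (2 - 3*b^2)
          = (3 - (Real.sqrt (1 - b^2))^2) * (3 * (Real.sqrt (1 - b^2))^2 - 1) := by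
        rw [hs2]; ring
      linarith
    · have hr0 : (0:ℝ) < Real.sqrt 3 := by positivity
      have hr2 : (Real.sqrt 3)^2 = 3 := Real.sq_sqrt (by norm_num)
      have h2s : Real.sqrt 3 < 2 * Real.sqrt (1 - b^2) := by
        have : (Real.sqrt 3)^2 < (2 * Real.sqrt (1 - b^2))^2 := by
          rw [hr2, mul_pow, hs2]; nlinarith
        exact lt_of_pow_lt_pow_left₀ 2 (by positivity) this
      rw [div_lt_div_iff₀ hden (by norm_num)]
      have h := upper_core (Real.sqrt (1 - b^2)) (Real.sqrt 3) hr2 hr0 h2s hs1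
      have hcube : (Real.sqrt (1 - b^2))^3 = (1 - b^2) * Real.sqrt (1 - b^2) := by
        rw [pow_succ, hs2]
      rw [hcube] at h
      have hN : (2 + b^2) * (2 - 3*b^2)
          = (3 - (Real.sqrt (1 - b^2))^2) * (3 * (Real.sqrt (1 - b^2))^2 - 1) := by
        rw [hs2]; ring
      linarith
end

section
/- For b ∈ (0, 1/2): (i) (8/9)·A ≤ f(b)·A ≤ A, (ii) (5√3/9)·A ≤ g(b)·A ≤ A, and (iii) f(b)·A ≤ g(b)·A ≤ (5√3/8)·f(b)·A for any nonnegative real A; moreover f(b) < g(b) < 1. -/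
set_option maxHeartbeats 1000000


theorem area_comparison (b A : ℝ) (hb : b ∈ Set.Ioo (0 : ℝ) (1 / 2)) (hA : 0 ≤ A) :
    let f := 2 / (2 + b ^ 2)
    let g := (2 - 3 * b ^ 2) / (2 * (1 - b ^ 2) * Real.sqrt (1 - b ^ 2))
    ((8 / 9) * A ≤ f * A ∧ f * A ≤ A) ∧
    ((5 * Real.sqrt 3 / 9) * A ≤ g * A ∧ g * A ≤ A) ∧
    (f * A ≤ g * A ∧ g * A ≤ (5 * Real.sqrt 3 / 8) * (f * A)) ∧
    f < g ∧ g < 1 := by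
  obtain ⟨hb0, hb2⟩ := hb
  intro f g
  have hx0 : 0 < b ^ 2 := by positivity
  have hx : b ^ 2 < 1 / 4 := by nlinarith
  have h1x : (0:ℝ) < 1 - b ^ 2 := by nlinarith
  have h14 : (0:ℝ) ≤ 1 / 4 - b ^ 2 := by linarith
  set s := Real.sqrt (1 - b ^ 2) with hsdef
  have hs0 : 0 < s := Real.sqrt_pos.2 h1x
  have hs2 : s ^ 2 = 1 - b ^ 2 := Real.sq_sqrt h1x.le
  have ht0 : (0:ℝ) < Real.sqrt 3 := by positivity
  have ht2 : Real.sqrt 3 ^ 2 = 3 := Real.sq_sqrt (by norm_num)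
  set t := Real.sqrt 3 with htdef
  have hN : 0 < 2 - 3 * b ^ 2 := by nlinarith
  have hD : 0 < 2 * (1 - b ^ 2) * s := by positivity
  -- f bounds
  have hf1 : f ≤ 1 := by
    show 2 / (2 + b ^ 2) ≤ 1
    rw [div_le_one (by positivity)]; nlinarith
  have hf8 : (8:ℝ) / 9 ≤ f := by
    show (8:ℝ) / 9 ≤ 2 / (2 + b ^ 2)
    rw [div_le_div_iff₀ (by norm_num) (by positivity)]; nlinarith
  -- g < 1
  have hg1 : g < 1 := by
    show (2 - 3 * b ^ 2) / (2 * (1 - b ^ 2) * s) < 1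
    rw [div_lt_one hD]
    have hexp : (2 * (1 - b ^ 2) * s) ^ 2 = 4 * (1 - b ^ 2) ^ 3 := by
      have : (2 * (1 - b ^ 2) * s) ^ 2 = 4 * (1 - b ^ 2) ^ 2 * s ^ 2 := by ring
      rw [this, hs2]; ring
    have key : (2 - 3 * b ^ 2) ^ 2 < (2 * (1 - b ^ 2) * s) ^ 2 := by
      rw [hexp]; nlinarith [mul_pos hx0 hx0, sq_nonneg (b ^ 2)]
    exact lt_of_pow_lt_pow_left₀ 2 hD.le key
  -- 5√3/9 ≤ g
  have hg5 : 5 * t / 9 ≤ g := by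
    show 5 * t / 9 ≤ (2 - 3 * b ^ 2) / (2 * (1 - b ^ 2) * s)
    rw [div_le_div_iff₀ (by norm_num) hD]
    have hexp : (5 * t * (2 * (1 - b ^ 2) * s)) ^ 2 = 300 * (1 - b ^ 2) ^ 3 := by
      have : (5 * t * (2 * (1 - b ^ 2) * s)) ^ 2
          = 100 * t ^ 2 * (1 - b ^ 2) ^ 2 * s ^ 2 := by ring
      rw [this, ht2, hs2]; ring
    have key : (5 * t * (2 * (1 - b ^ 2) * s)) ^ 2 ≤ ((2 - 3 * b ^ 2) * 9) ^ 2 := by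
      rw [hexp]
      nlinarith [mul_nonneg h14 (mul_nonneg h14 h14), mul_nonneg h14 h14,
        sq_nonneg (b ^ 2), mul_nonneg h14 (sq_nonneg (b ^ 2))]
    exact le_of_pow_le_pow_left₀ two_ne_zero (by positivity) key
  -- f < g
  have hfg : f < g := by
    show 2 / (2 + b ^ 2) < (2 - 3 * b ^ 2) / (2 * (1 - b ^ 2) * s)
    rw [div_lt_div_iff₀ (by positivity) hD]
    have hexp : (2 * (1 - b ^ 2) * s) ^ 2 = 4 * (1 - b ^ 2) ^ 3 := by
      have : (2 * (1 - b ^ 2) * s) ^ 2 = 4 * (1 - b ^ 2) ^ 2 * s ^ 2 := by ring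
      rw [this, hs2]; ring
    have key : (2 * (2 * (1 - b ^ 2) * s)) ^ 2 < ((2 - 3 * b ^ 2) * (2 + b ^ 2)) ^ 2 := by
      have h2 : (2 * (2 * (1 - b ^ 2) * s)) ^ 2 = 16 * (1 - b ^ 2) ^ 3 := by
        rw [mul_pow, hexp]; ring
      rw [h2]
      nlinarith [mul_pos hx0 hx0, mul_pos (mul_pos hx0 hx0) hx0,
        mul_nonneg hx0.le (mul_nonneg hx0.le hx0.le)]
    exact lt_of_pow_lt_pow_left₀ 2 (by positivity) key
  -- g ≤ 5√3/8 * f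
  have hgf : g ≤ 5 * t / 8 * f := by
    show (2 - 3 * b ^ 2) / (2 * (1 - b ^ 2) * s) ≤ 5 * t / 8 * (2 / (2 + b ^ 2))
    rw [div_mul_div_comm, div_le_div_iff₀ hD (by positivity)]
    have hexp : (5 * t * 2 * (2 * (1 - b ^ 2) * s)) ^ 2 = 1200 * (1 - b ^ 2) ^ 3 := by
      have : (5 * t * 2 * (2 * (1 - b ^ 2) * s)) ^ 2
          = 400 * t ^ 2 * (1 - b ^ 2) ^ 2 * s ^ 2 := by ring
      rw [this, ht2, hs2]; ring
    have hr : 0 ≤ 36 * (b ^ 2) ^ 3 + 180 * (b ^ 2) ^ 2 - 212 * b ^ 2 + 44 := by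
      nlinarith [mul_nonneg h14 h14, mul_nonneg (mul_nonneg h14 h14) h14]
    have hq : 0 ≤ (1 / 4 - b ^ 2) *
        (36 * (b ^ 2) ^ 3 + 180 * (b ^ 2) ^ 2 - 212 * b ^ 2 + 44) := mul_nonneg h14 hr
    have key : ((2 - 3 * b ^ 2) * (8 * (2 + b ^ 2))) ^ 2
        ≤ (5 * t * 2 * (2 * (1 - b ^ 2) * s)) ^ 2 := by
      rw [hexp]; nlinarith [hq]
    exact le_of_pow_le_pow_left₀ two_ne_zero (by positivity) key
  refine ⟨⟨mul_le_mul_of_nonneg_right hf8 hA, ?_⟩,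
    ⟨mul_le_mul_of_nonneg_right hg5 hA, ?_⟩,
    ⟨mul_le_mul_of_nonneg_right hfg.le hA, ?_⟩, hfg, hg1⟩
  · calc f * A ≤ 1 * A := mul_le_mul_of_nonneg_right hf1 hA
      _ = A := one_mul A
  · calc g * A ≤ 1 * A := mul_le_mul_of_nonneg_right hg1.le hA
      _ = A := one_mul A
  · calc g * A ≤ (5 * t / 8 * f) * A := mul_le_mul_of_nonneg_right hgf hA
      _ = 5 * t / 8 * (f * A) := by ring
end
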